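/- For personalized k-valued additive valuations, the round-robin-by-type allocation (within each item type, assigning the r-th arriving copy to the agent with the r-th highest value for that type) is locally efficient, and every pairwise envy is at most k^n, giving a total minimum subsidy of at most n^2 · k^n. -/

import Mathlib

open Finset

/-- Number of `p < M` with `p % n = r`: copies a rank-`r` agent gets in round robin. -/
def rrCnt (n M r : ℕ) : ℕ := ((Finset.range M).filter (fun p => p % n = r)).card

lemma rrCnt_eq {n : ℕ} (hn : 0 < n) {r : ℕ} (hr : r < n) :
    ∀ M, rrCnt n M r = (M + n - 1 - r) / n := by
  intro M
  induction M with
  | zero =>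
    simp only [rrCnt, Finset.range_zero, Finset.filter_empty, Finset.card_empty]
    symm
    exact Nat.div_eq_of_lt (by omega)
  | succ M ih =>
    have step : rrCnt n (M + 1) r = rrCnt n M r + if M % n = r then 1 else 0 := by
      unfold rrCnt
      rw [Finset.range_add_one, Finset.filter_insert]
      split
      · rw [Finset.card_insert_of_notMem (by simp)]
      · simp
    rw [step, ih]
    have h1 : M + 1 + n - 1 - r = (M + n - 1 - r) + 1 := by omega
    rw [h1, Nat.succ_div]
    have h3 : M + n - 1 - r + 1 = M + n - r := by omega
    have h2 : (n ∣ M + n - 1 - r + 1) ↔ M % n = r := by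
      rw [h3]
      constructor
      · intro hd
        rcases le_or_gt r M with h | h
        · have e : M + n - r = (M - r) + n := by omega
          rw [e] at hd
          have hd' : n ∣ M - r := (Nat.dvd_add_self_right).mp hd
          have hmod : r % n = M % n := (Nat.modEq_iff_dvd' h).mpr hd'
          rw [Nat.mod_eq_of_lt hr] at hmod
          exact hmod.symm
        · exfalso
          have h4 : 0 < M + n - r := by omega
          have h5 : M + n - r < n := by omega
          exact absurd (Nat.le_of_dvd h4 hd) (by omega)
      · intro hM
        rcases le_or_gt r M with h | h
        · have e : M + n - r = (M - r) + n := by omega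
          rw [e]
          refine Nat.dvd_add_self_right.mpr ?_
          refine (Nat.modEq_iff_dvd' h).mp ?_
          show r % n = M % n
          rw [Nat.mod_eq_of_lt hr, hM]
        · exfalso
          have : M % n = M := Nat.mod_eq_of_lt (by omega)
          omega
    simp only [h2]

lemma rrCnt_anti {n : ℕ} (hn : 0 < n) {r r' : ℕ} (h : r ≤ r') (hr' : r' < n) (M : ℕ) :
    rrCnt n M r' ≤ rrCnt n M r := by
  rw [rrCnt_eq hn hr', rrCnt_eq hn (lt_of_le_of_lt h hr')]
  exact Nat.div_le_div_right (by omega)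

lemma rrCnt_le_succ {n : ℕ} (hn : 0 < n) {r r' : ℕ} (hr : r < n) (hr' : r' < n) (M : ℕ) :
    rrCnt n M r ≤ rrCnt n M r' + 1 := by
  rw [rrCnt_eq hn hr, rrCnt_eq hn hr']
  calc (M + n - 1 - r) / n ≤ (M + n - 1 - r' + n) / n :=
        Nat.div_le_div_right (by omega)
    _ = (M + n - 1 - r') / n + 1 := Nat.add_div_right _ hn

variable {n : ℕ} [NeZero n]

/-- Bellman iteration: `bell n w s i` is the max weight of a walk of length `≤ s` from `i`. -/
noncomputable def bell (n : ℕ) [NeZero n] (w : Fin n → Fin n → ℝ) : ℕ → Fin n → ℝ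
  | 0 => fun _ => 0
  | (s+1) => fun i =>
      max 0 (Finset.univ.sup' Finset.univ_nonempty fun j => w i j + bell n w s j)

/-- Weight of a walk `ρ 0, ρ 1, …, ρ L`. -/
def wlk {n : ℕ} (w : Fin n → Fin n → ℝ) (ρ : ℕ → Fin n) (L : ℕ) : ℝ :=
  ∑ t ∈ Finset.range L, w (ρ t) (ρ (t+1))

lemma bell_nonneg (w : Fin n → Fin n → ℝ) (s : ℕ) (i : Fin n) : 0 ≤ bell n w s i := by
  cases s <;> simp [bell]

lemma bell_le_mul (w : Fin n → Fin n → ℝ) {B : ℝ} (hB0 : 0 ≤ B) (hB : ∀ i j, w i j ≤ B) :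
    ∀ s i, bell n w s i ≤ s * B := by
  intro s
  induction s with
  | zero => intro i; simp [bell]
  | succ s ih =>
    intro i
    have h1 : ∀ j ∈ Finset.univ, w i j + bell n w s j ≤ (s + 1 : ℕ) * B := by
      intro j _
      have := ih j
      have := hB i j
      push_cast
      nlinarith
    simp only [bell]
    apply max_le
    · positivity
    · exact Finset.sup'_le _ _ h1

lemma wlk_succ (w : Fin n → Fin n → ℝ) (ρ : ℕ → Fin n) (L : ℕ) :
    wlk w ρ (L + 1) = w (ρ 0) (ρ 1) + wlk w (fun t => ρ (t + 1)) L := by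
  unfold wlk
  rw [Finset.sum_range_succ']
  exact add_comm _ _

lemma wlk_le_bell (w : Fin n → Fin n → ℝ) :
    ∀ s (ρ : ℕ → Fin n) (L : ℕ), L ≤ s → wlk w ρ L ≤ bell n w s (ρ 0) := by
  intro s
  induction s with
  | zero =>
    intro ρ L hL
    obtain rfl : L = 0 := by omega
    simp [wlk, bell]
  | succ s ih =>
    intro ρ L hL
    cases L with
    | zero => simpa [wlk] using bell_nonneg w (s+1) (ρ 0)
    | succ L =>
      rw [wlk_succ]
      have h1 : wlk w (fun t => ρ (t+1)) L ≤ bell n w s (ρ 1) := ih _ L (by omega)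
      have h2 : w (ρ 0) (ρ 1) + bell n w s (ρ 1) ≤
          Finset.univ.sup' Finset.univ_nonempty fun j => w (ρ 0) j + bell n w s j :=
        Finset.le_sup' (fun j => w (ρ 0) j + bell n w s j) (Finset.mem_univ (ρ 1))
      have h3 : (Finset.univ.sup' Finset.univ_nonempty fun j => w (ρ 0) j + bell n w s j)
          ≤ bell n w (s+1) (ρ 0) := by
        simp only [bell]
        exact le_max_right _ _
      linarith

lemma bell_exists_walk (w : Fin n → Fin n → ℝ) :
    ∀ s (i : Fin n), ∃ (ρ : ℕ → Fin n) (L : ℕ),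
      ρ 0 = i ∧ L ≤ s ∧ bell n w s i = wlk w ρ L := by
  intro s
  induction s with
  | zero => intro i; exact ⟨fun _ => i, 0, rfl, le_refl _, by simp [bell, wlk]⟩
  | succ s ih =>
    intro i
    rcases le_or_gt (Finset.univ.sup' Finset.univ_nonempty fun j => w i j + bell n w s j) 0
      with hle | hlt
    · refine ⟨fun _ => i, 0, rfl, by omega, ?_⟩
      simp only [bell, wlk, Finset.range_zero, Finset.sum_empty]
      exact max_eq_left hle
    · obtain ⟨j, -, hj⟩ := Finset.exists_mem_eq_sup' (Finset.univ_nonempty)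
        (fun j => w i j + bell n w s j)
      obtain ⟨ρ', L', h0, hL, hval⟩ := ih j
      refine ⟨fun t => Nat.casesOn t i (fun t' => ρ' t'), L' + 1, rfl, by omega, ?_⟩
      rw [wlk_succ]
      have : (fun t => (Nat.casesOn (t+1) i (fun t' => ρ' t') : Fin n)) = ρ' := rfl
      rw [this]
      simp only [bell]
      rw [max_eq_right hlt.le, hj]
      show w i j + bell n w s j = w i (ρ' 0) + wlk w ρ' L'
      rw [h0, hval]

omit [NeZero n] in
lemma wlk_splice (w : Fin n → Fin n → ℝ) (ρ : ℕ → Fin n) (L s s' : ℕ)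
    (h1 : s < s') (h2 : s' ≤ L) (hss : ρ s = ρ s') :
    wlk w ρ L = wlk w (fun t => if t < s then ρ t else ρ (t + (s' - s))) (L - (s' - s))
      + wlk w (fun t => ρ (t + s)) (s' - s) := by
  set d := s' - s with hd
  set ρ₁ : ℕ → Fin n := fun t => if t < s then ρ t else ρ (t + d) with hρ₁
  have hmid : wlk w (fun t => ρ (t + s)) d = ∑ t ∈ Finset.Ico s s', w (ρ t) (ρ (t+1)) := by
    rw [Finset.sum_Ico_eq_sum_range, wlk]
    refine Finset.sum_congr (congrArg Finset.range (by omega)) fun u _ => ?_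
    congr 1
    · exact congrArg ρ (by omega)
    · exact congrArg ρ (by omega)
  have hfirst : wlk w ρ₁ (L - d) =
      (∑ t ∈ Finset.Ico 0 s, w (ρ t) (ρ (t+1))) + ∑ t ∈ Finset.Ico s' L, w (ρ t) (ρ (t+1)) := by
    have hsplit : wlk w ρ₁ (L - d) =
        (∑ t ∈ Finset.Ico 0 s, w (ρ₁ t) (ρ₁ (t+1)))
          + ∑ t ∈ Finset.Ico s (L - d), w (ρ₁ t) (ρ₁ (t+1)) := by
      rw [wlk, Finset.range_eq_Ico, ← Finset.sum_Ico_consecutive _ (Nat.zero_le s) (by omega)]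
    rw [hsplit]
    congr 1
    · refine Finset.sum_congr rfl fun t ht => ?_
      have htls : t < s := (Finset.mem_Ico.mp ht).2
      congr 1
      · simp only [hρ₁, if_pos htls]
      · by_cases h : t + 1 < s
        · simp only [hρ₁, if_pos h]
        · have he : t + 1 = s := by omega
          simp only [hρ₁, if_neg h]
          rw [he, show s + d = s' from by omega, ← hss]
    · rw [Finset.sum_Ico_eq_sum_range, Finset.sum_Ico_eq_sum_range]
      refine Finset.sum_congr (congrArg Finset.range (by omega)) fun u hu => ?_
      rw [Finset.mem_range] at hu
      have ha : ¬ (s + u < s) := by omega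
      have hb : ¬ (s + u + 1 < s) := by omega
      simp only [hρ₁, if_neg ha, if_neg hb]
      congr 1
      · exact congrArg ρ (by omega)
      · exact congrArg ρ (by omega)
  have hall : wlk w ρ L =
      (∑ t ∈ Finset.Ico 0 s, w (ρ t) (ρ (t+1)))
        + (∑ t ∈ Finset.Ico s s', w (ρ t) (ρ (t+1)))
        + ∑ t ∈ Finset.Ico s' L, w (ρ t) (ρ (t+1)) := by
    rw [wlk, Finset.range_eq_Ico, ← Finset.sum_Ico_consecutive _ (Nat.zero_le s') h2,
      ← Finset.sum_Ico_consecutive _ (Nat.zero_le s) h1.le]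
  rw [hall, hfirst, hmid]
  ring

lemma npc (w : Fin n → Fin n → ℝ) (hw0 : ∀ i, w i i = 0)
    (hperm : ∀ π : Equiv.Perm (Fin n), ∑ i, w i (π i) ≤ 0) :
    ∀ (L : ℕ) (ρ : ℕ → Fin n), ρ L = ρ 0 → wlk w ρ L ≤ 0 := by
  intro L
  induction L using Nat.strong_induction_on with
  | _ L IH =>
  intro ρ hclosed
  by_cases H : ∃ s s', s < s' ∧ s' ≤ L ∧ ρ s = ρ s' ∧ ¬(s = 0 ∧ s' = L)
  · obtain ⟨s, s', h1, h2, hss, hne⟩ := H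
    rw [Decidable.not_and_iff_or_not] at hne
    have hd : 0 < s' - s := by omega
    have hdL : s' - s < L := by rcases hne with hne | hne <;> omega
    rw [wlk_splice w ρ L s s' h1 h2 hss]
    have c2 : wlk w (fun t => ρ (t + s)) (s' - s) ≤ 0 := by
      refine IH _ hdL _ ?_
      show ρ (s' - s + s) = ρ (0 + s)
      rw [show s' - s + s = s' from by omega, Nat.zero_add, hss]
    have c1 : wlk w (fun t => if t < s then ρ t else ρ (t + (s' - s))) (L - (s' - s)) ≤ 0 := by
      refine IH _ (by omega) _ ?_
      have e1 : (if L - (s' - s) < s then ρ (L - (s' - s)) else ρ (L - (s' - s) + (s' - s)))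
          = ρ 0 := by
        rw [if_neg (by omega), show L - (s' - s) + (s' - s) = L from by omega, hclosed]
      have e2 : (if 0 < s then ρ 0 else ρ (0 + (s' - s))) = ρ 0 := by
        by_cases hs : 0 < s
        · rw [if_pos hs]
        · rw [if_neg hs, show 0 + (s' - s) = s' from by omega, ← hss,
            show s = 0 from by omega]
      show (if L - (s' - s) < s then ρ (L - (s' - s)) else ρ (L - (s' - s) + (s' - s)))
          = (if 0 < s then ρ 0 else ρ (0 + (s' - s)))
      rw [e1, e2]
    linarith
  · push_neg at H
    rcases Nat.eq_zero_or_pos L with rfl | hL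
    · simp [wlk]
    · have hinj : ∀ x ∈ Finset.range L, ∀ y ∈ Finset.range L, ρ x = ρ y → x = y := by
        intro x hx y hy hxy
        rw [Finset.mem_range] at hx hy
        rcases lt_trichotomy x y with h | h | h
        · have := H x y h (by omega) hxy
          omega
        · exact h
        · have := H y x h (by omega) hxy.symm
          omega
      set l : List (Fin n) := (List.range L).map ρ with hl
      have hlen : l.length = L := by simp [hl]
      have hnd : l.Nodup := by
        refine List.Nodup.map_on ?_ List.nodup_range
        intro x hx y hy hxy
        exact hinj x (by simpa using hx) y (by simpa using hy) hxy
      have hget : ∀ t (ht : t < L), l[t]'(by omega) = ρ t := by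
        intro t ht
        simp [hl]
      set π := l.formPerm with hπdef
      have hπ : ∀ t, t < L → π (ρ t) = ρ (t + 1) := by
        intro t ht
        have h0 := List.formPerm_apply_getElem l hnd t (by omega)
        rw [hget t ht] at h0
        have hmlt : (t + 1) % l.length < L := by rw [hlen]; exact Nat.mod_lt _ (by omega)
        rw [hget _ hmlt] at h0
        rw [hπdef, h0]
        by_cases hlt : t + 1 < L
        · rw [show (t + 1) % l.length = t + 1 from by rw [hlen]; exact Nat.mod_eq_of_lt hlt]
        · have he : t + 1 = L := by omega
          rw [show (t + 1) % l.length = 0 from by rw [hlen, he]; exact Nat.mod_self _,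
            ← hclosed, he]
      have hmem : ∀ i : Fin n, i ∈ l ↔ i ∈ Finset.image ρ (Finset.range L) := by
        intro i
        simp [hl]
      have hsum : wlk w ρ L = ∑ i, w i (π i) := by
        rw [← Finset.sum_subset (Finset.subset_univ (Finset.image ρ (Finset.range L)))
          (fun i _ hi => by
            rw [List.formPerm_apply_of_notMem (by rw [hmem]; exact hi)]
            exact hw0 i)]
        rw [Finset.sum_image hinj]
        refine Finset.sum_congr rfl fun t ht => ?_
        rw [hπ t (Finset.mem_range.mp ht)]
      rw [hsum]
      exact hperm π

lemma wlk_le_bell_n (w : Fin n → Fin n → ℝ) (hw0 : ∀ i, w i i = 0)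
    (hperm : ∀ π : Equiv.Perm (Fin n), ∑ i, w i (π i) ≤ 0) :
    ∀ (L : ℕ) (ρ : ℕ → Fin n), wlk w ρ L ≤ bell n w n (ρ 0) := by
  intro L
  induction L using Nat.strong_induction_on with
  | _ L IH =>
  intro ρ
  rcases le_or_gt L n with h | h
  · exact wlk_le_bell w n ρ L h
  · obtain ⟨s, hs, s', hs', hne, hss⟩ :=
      Finset.exists_ne_map_eq_of_card_lt_of_maps_to
        (s := Finset.range (n + 1)) (t := (Finset.univ : Finset (Fin n)))
        (by simp) (fun a _ => Finset.mem_univ (ρ a))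
    rw [Finset.mem_range] at hs hs'
    have key : ∀ u u' : ℕ, u < u' → u' ≤ n → ρ u = ρ u' →
        wlk w ρ L ≤ bell n w n (ρ 0) := by
      intro u u' h1 h2 huu
      rw [wlk_splice w ρ L u u' h1 (by omega) huu]
      have c2 : wlk w (fun t => ρ (t + u)) (u' - u) ≤ 0 := by
        refine npc w hw0 hperm _ _ ?_
        show ρ (u' - u + u) = ρ (0 + u)
        rw [show u' - u + u = u' from by omega, Nat.zero_add, huu]
      have c1 : wlk w (fun t => if t < u then ρ t else ρ (t + (u' - u))) (L - (u' - u))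
          ≤ bell n w n (ρ 0) := by
        have := IH (L - (u' - u)) (by omega) (fun t => if t < u then ρ t else ρ (t + (u' - u)))
        have e2 : (if 0 < u then ρ 0 else ρ (0 + (u' - u))) = ρ 0 := by
          by_cases hu : 0 < u
          · rw [if_pos hu]
          · rw [if_neg hu, show 0 + (u' - u) = u' from by omega, ← huu,
              show u = 0 from by omega]
        rwa [e2] at this
      linarith
    rcases lt_or_gt_of_ne hne with h1 | h1
    · exact key s s' h1 (by omega) hss
    · exact key s' s h1 (by omega) hss.symm

lemma bell_fix (w : Fin n → Fin n → ℝ) (hw0 : ∀ i, w i i = 0)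
    (hperm : ∀ π : Equiv.Perm (Fin n), ∑ i, w i (π i) ≤ 0) (i j : Fin n) :
    w i j + bell n w n j ≤ bell n w n i := by
  obtain ⟨ρ', L, h0, hL, hval⟩ := bell_exists_walk w n j
  have hwalk : w i j + bell n w n j = wlk w (fun t => Nat.casesOn t i (fun t' => ρ' t')) (L+1) := by
    rw [wlk_succ]
    show w i j + bell n w n j = w i (ρ' 0) + wlk w ρ' L
    rw [h0, hval]
  rw [hwalk]
  exact wlk_le_bell_n w hw0 hperm (L + 1) _

/-- Existence of a bounded nonnegative potential for a weight matrix with no positive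
permutation sums. -/
lemma exists_potential (w : Fin n → Fin n → ℝ) (B : ℝ) (hB0 : 0 ≤ B)
    (hB : ∀ i j, w i j ≤ B) (hw0 : ∀ i, w i i = 0)
    (hperm : ∀ π : Equiv.Perm (Fin n), ∑ i, w i (π i) ≤ 0) :
    ∃ p : Fin n → ℝ, (∀ i, 0 ≤ p i) ∧ (∀ i j, w i j + p j ≤ p i) ∧ ∀ i, p i ≤ n * B := by
  exact ⟨bell n w n, fun i => bell_nonneg w n i,
    fun i j => bell_fix w hw0 hperm i j, fun i => bell_le_mul w hB0 hB n i⟩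

open Finset
open scoped Classical

/-- Personalized `k`-valued additive valuations: each agent `i` has an additive
valuation whose singleton values lie in an agent-specific set `A i` of at most `k`
values in `[0,1]`. The type of an item is the vector of its singleton values. The
round-robin-by-type rule assigns, within each type, the `r`-th arriving copy to the
agent with the `r`-th highest value for that type (cyclically, via a sorting
permutation `σ t`). The resulting allocation is locally efficient, every pairwise envy
is at most `k^n`, and a nonnegative envy-eliminating subsidy vector of total at most
`n² · k^n` exists. -/
theorem k_valued_round_robin_subsidy (n m k : ℕ) (hn : 0 < n)
    (val : Fin n → Fin m → ℝ)
    (A : Fin n → Finset ℝ) (hA : ∀ i, (A i).card ≤ k)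
    (hrange : ∀ i g, val i g ∈ A i ∧ 0 ≤ val i g ∧ val i g ≤ 1)
    (typ : Fin m → (Fin n → ℝ)) (htyp : ∀ g, typ g = fun i => val i g)
    (σ : (Fin n → ℝ) → Equiv.Perm (Fin n))
    (hσ : ∀ t : Fin n → ℝ, ∀ r r' : Fin n, r ≤ r' → t (σ t r') ≤ t (σ t r))
    (pos : Fin m → ℕ)
    (hpos : ∀ g : Fin m, pos g =
      ((Finset.univ : Finset (Fin m)).filter (fun g' => g' < g ∧ typ g' = typ g)).card)
    (a : Fin m → Fin n)
    (ha : ∀ g : Fin m, a g = σ (typ g) ⟨pos g % n, Nat.mod_lt _ hn⟩)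
    (X : Fin n → Finset (Fin m))
    (hX : ∀ i, X i = (Finset.univ : Finset (Fin m)).filter (fun g => a g = i)) :
    (∀ π : Equiv.Perm (Fin n),
      ∑ i, ∑ g ∈ X i, val (π i) g ≤ ∑ i, ∑ g ∈ X i, val i g) ∧
    (∀ i j, (∑ g ∈ X j, val i g) - ∑ g ∈ X i, val i g ≤ (k : ℝ) ^ n) ∧
    ∃ p : Fin n → ℝ, (∀ i, 0 ≤ p i) ∧
      (∀ i j, ∑ g ∈ X j, val i g + p j ≤ ∑ g ∈ X i, val i g + p i) ∧
      ∑ i, p i ≤ (n : ℝ) ^ 2 * (k : ℝ) ^ n := by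
  haveI : NeZero n := ⟨hn.ne'⟩
  set T : Finset (Fin n → ℝ) := Finset.image typ Finset.univ with hT
  set c : (Fin n → ℝ) → Fin n → ℕ :=
    fun t j => ((X j).filter (fun g => typ g = t)).card with hc
  have hT01 : ∀ t ∈ T, ∀ i0 : Fin n, 0 ≤ t i0 ∧ t i0 ≤ 1 := by
    intro t ht i0
    obtain ⟨g, -, rfl⟩ := Finset.mem_image.mp ht
    rw [htyp g]
    exact ⟨(hrange i0 g).2.1, (hrange i0 g).2.2⟩
  have L1 : ∀ i j : Fin n, ∑ g ∈ X j, val i g = ∑ t ∈ T, (c t j : ℝ) * t i := by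
    intro i j
    have hmap : ∀ g ∈ X j, typ g ∈ T := fun g _ =>
      Finset.mem_image_of_mem typ (Finset.mem_univ g)
    calc ∑ g ∈ X j, val i g = ∑ g ∈ X j, typ g i := by
          refine Finset.sum_congr rfl fun g _ => ?_
          rw [htyp g]
      _ = ∑ t ∈ T, ∑ g ∈ (X j).filter (fun g => typ g = t), typ g i :=
          (Finset.sum_fiberwise_of_maps_to hmap _).symm
      _ = ∑ t ∈ T, (c t j : ℝ) * t i := by
          refine Finset.sum_congr rfl fun t ht => ?_
          have hconst : ∑ g ∈ (X j).filter (fun g => typ g = t), typ g i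
              = ∑ _g ∈ (X j).filter (fun g => typ g = t), t i := by
            refine Finset.sum_congr rfl fun g hg => ?_
            rw [(Finset.mem_filter.mp hg).2]
          simp only [hc]
          rw [hconst, Finset.sum_const, nsmul_eq_mul]
  have P1 : ∀ g g' : Fin m, typ g = typ g' → g < g' → pos g < pos g' := by
    intro g g' hty hlt
    rw [hpos g, hpos g']
    refine Finset.card_lt_card ((Finset.ssubset_iff_of_subset ?_).mpr ⟨g, ?_, ?_⟩)
    · intro x hx
      rw [Finset.mem_filter] at hx ⊢
      exact ⟨hx.1, hx.2.1.trans hlt, hx.2.2.trans hty⟩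
    · exact Finset.mem_filter.mpr ⟨Finset.mem_univ g, hlt, hty⟩
    · intro hg
      exact absurd ((Finset.mem_filter.mp hg).2.1) (lt_irrefl g)
  have P2 : ∀ g : Fin m,
      pos g < ((Finset.univ : Finset (Fin m)).filter (fun g' => typ g' = typ g)).card := by
    intro g
    rw [hpos g]
    refine Finset.card_lt_card ((Finset.ssubset_iff_of_subset ?_).mpr ⟨g, ?_, ?_⟩)
    · intro x hx
      rw [Finset.mem_filter] at hx ⊢
      exact ⟨hx.1, hx.2.2⟩
    · exact Finset.mem_filter.mpr ⟨Finset.mem_univ g, rfl⟩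
    · intro hg
      exact absurd ((Finset.mem_filter.mp hg).2.1) (lt_irrefl g)
  have Pinj : ∀ t : Fin n → ℝ,
      ∀ g ∈ (Finset.univ : Finset (Fin m)).filter (fun g => typ g = t),
      ∀ g' ∈ (Finset.univ : Finset (Fin m)).filter (fun g => typ g = t),
      pos g = pos g' → g = g' := by
    intro t g hg g' hg' hpp
    have h1 : typ g = typ g' := by
      rw [(Finset.mem_filter.mp hg).2, (Finset.mem_filter.mp hg').2]
    rcases lt_trichotomy g g' with h | h | h
    · exact absurd (P1 g g' h1 h) (by omega)
    · exact h
    · exact absurd (P1 g' g h1.symm h) (by omega)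
  have P3 : ∀ t : Fin n → ℝ,
      Finset.image pos ((Finset.univ : Finset (Fin m)).filter (fun g => typ g = t))
        = Finset.range (((Finset.univ : Finset (Fin m)).filter (fun g => typ g = t)).card) := by
    intro t
    refine Finset.eq_of_subset_of_card_le ?_ ?_
    · intro p hp
      obtain ⟨g, hg, rfl⟩ := Finset.mem_image.mp hp
      rw [Finset.mem_range]
      have h2 := P2 g
      rwa [(Finset.mem_filter.mp hg).2] at h2
    · rw [Finset.card_range, Finset.card_image_of_injOn ?_]
      intro g hg g' hg' h
      exact Pinj t g (Finset.mem_coe.mp hg) g' (Finset.mem_coe.mp hg') h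
  have L3 : ∀ (t : Fin n → ℝ) (i : Fin n),
      c t i = rrCnt n (((Finset.univ : Finset (Fin m)).filter (fun g => typ g = t)).card)
        (((σ t)⁻¹ i : Fin n) : ℕ) := by
    intro t i
    have e1 : (X i).filter (fun g => typ g = t)
        = ((Finset.univ : Finset (Fin m)).filter (fun g => typ g = t)).filter
            (fun g => pos g % n = (((σ t)⁻¹ i : Fin n) : ℕ)) := by
      rw [hX i, Finset.filter_filter, Finset.filter_filter]
      refine Finset.filter_congr fun g _ => ?_
      constructor
      · rintro ⟨hag, hty⟩
        refine ⟨hty, ?_⟩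
        rw [ha g, hty] at hag
        have hx : (⟨pos g % n, Nat.mod_lt _ hn⟩ : Fin n) = (σ t)⁻¹ i := by
          rw [← hag, Equiv.Perm.inv_def, Equiv.symm_apply_apply]
        rw [← hx]
      · rintro ⟨hty, hmod⟩
        refine ⟨?_, hty⟩
        rw [ha g, hty]
        have hx : (⟨pos g % n, Nat.mod_lt _ hn⟩ : Fin n) = (σ t)⁻¹ i := Fin.ext hmod
        rw [hx, Equiv.Perm.inv_def, Equiv.apply_symm_apply]
    have e3 : (((Finset.univ : Finset (Fin m)).filter (fun g => typ g = t)).filter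
          (fun g => pos g % n = (((σ t)⁻¹ i : Fin n) : ℕ))).card
        = ((Finset.range (((Finset.univ : Finset (Fin m)).filter
            (fun g => typ g = t)).card)).filter
            (fun p => p % n = (((σ t)⁻¹ i : Fin n) : ℕ))).card := by
      rw [← P3 t, Finset.filter_image]
      refine (Finset.card_image_of_injOn ?_).symm
      intro g hg g' hg' h
      exact Pinj t g (Finset.filter_subset _ _ (Finset.mem_coe.mp hg))
        g' (Finset.filter_subset _ _ (Finset.mem_coe.mp hg')) h
    simp only [hc]
    rw [e1, e3, rrCnt]
  have hmono : ∀ t : Fin n → ℝ, Monovary (fun i => (c t i : ℝ)) t := by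
    intro t i j hij
    have hle : (σ t)⁻¹ j ≤ (σ t)⁻¹ i := by
      by_contra hcon
      push_neg at hcon
      have h2 := hσ t ((σ t)⁻¹ i) ((σ t)⁻¹ j) hcon.le
      rw [Equiv.Perm.inv_def, Equiv.apply_symm_apply, Equiv.apply_symm_apply] at h2
      exact absurd hij (not_lt.mpr h2)
    have h3 := rrCnt_anti hn (Fin.le_def.mp hle) ((σ t)⁻¹ i).isLt
      (((Finset.univ : Finset (Fin m)).filter (fun g => typ g = t)).card)
    rw [← L3 t i, ← L3 t j] at h3
    show (c t i : ℝ) ≤ (c t j : ℝ)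
    exact_mod_cast h3
  have conc1 : ∀ π : Equiv.Perm (Fin n),
      ∑ i, ∑ g ∈ X i, val (π i) g ≤ ∑ i, ∑ g ∈ X i, val i g := by
    intro π
    have lhs : ∑ i, ∑ g ∈ X i, val (π i) g = ∑ t ∈ T, ∑ i, (c t i : ℝ) * t (π i) := by
      rw [← Finset.sum_comm]
      exact Finset.sum_congr rfl fun i _ => L1 (π i) i
    have rhs : ∑ i, ∑ g ∈ X i, val i g = ∑ t ∈ T, ∑ i, (c t i : ℝ) * t i := by
      rw [← Finset.sum_comm]
      exact Finset.sum_congr rfl fun i _ => L1 i i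
    rw [lhs, rhs]
    refine Finset.sum_le_sum fun t _ => ?_
    have h := (hmono t).sum_smul_comp_perm_le_sum_smul (σ := π)
    simpa [smul_eq_mul] using h
  have hTcard : (T.card : ℝ) ≤ (k : ℝ) ^ n := by
    have hsub : T ⊆ Fintype.piFinset A := by
      intro t ht
      obtain ⟨g, -, rfl⟩ := Finset.mem_image.mp ht
      rw [Fintype.mem_piFinset]
      intro i
      rw [htyp g]
      exact (hrange i g).1
    have h1 : T.card ≤ k ^ n :=
      calc T.card ≤ (Fintype.piFinset A).card := Finset.card_le_card hsub
        _ = ∏ i, (A i).card := Fintype.card_piFinset A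
        _ ≤ ∏ _i : Fin n, k := Finset.prod_le_prod' (fun i _ => hA i)
        _ = k ^ n := by rw [Finset.prod_const, Finset.card_univ, Fintype.card_fin]
    exact_mod_cast h1
  have conc2 : ∀ i j, (∑ g ∈ X j, val i g) - ∑ g ∈ X i, val i g ≤ (k : ℝ) ^ n := by
    intro i j
    rw [L1 i j, L1 i i, ← Finset.sum_sub_distrib]
    calc ∑ t ∈ T, ((c t j : ℝ) * t i - (c t i : ℝ) * t i)
        ≤ ∑ _t ∈ T, (1 : ℝ) := by
          refine Finset.sum_le_sum fun t ht => ?_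
          have hd : (c t j : ℝ) ≤ (c t i : ℝ) + 1 := by
            have h4 := rrCnt_le_succ hn ((σ t)⁻¹ j).isLt ((σ t)⁻¹ i).isLt
              (((Finset.univ : Finset (Fin m)).filter (fun g => typ g = t)).card)
            rw [← L3 t j, ← L3 t i] at h4
            exact_mod_cast h4
          obtain ⟨h0, h1⟩ := hT01 t ht i
          nlinarith
      _ = (T.card : ℝ) := by rw [Finset.sum_const, nsmul_eq_mul, mul_one]
      _ ≤ (k : ℝ) ^ n := hTcard
  refine ⟨conc1, conc2, ?_⟩
  set w : Fin n → Fin n → ℝ :=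
    fun i j => (∑ g ∈ X j, val i g) - ∑ g ∈ X i, val i g with hw
  have hw0 : ∀ i, w i i = 0 := fun i => sub_self _
  have hperm : ∀ π : Equiv.Perm (Fin n), ∑ i, w i (π i) ≤ 0 := by
    intro π
    have h2 : ∑ i, ∑ g ∈ X (π i), val i g = ∑ j, ∑ g ∈ X j, val (π⁻¹ j) g := by
      rw [← Equiv.sum_comp π (fun j => ∑ g ∈ X j, val (π⁻¹ j) g)]
      refine Finset.sum_congr rfl fun i _ => Finset.sum_congr rfl fun g _ => ?_
      rw [Equiv.Perm.inv_def, Equiv.symm_apply_apply]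
    have h3 := conc1 π⁻¹
    have h4 : ∑ i, w i (π i)
        = (∑ i, ∑ g ∈ X (π i), val i g) - ∑ i, ∑ g ∈ X i, val i g := by
      simp only [hw]
      rw [Finset.sum_sub_distrib]
    rw [h4, h2]
    linarith
  obtain ⟨p, hp0, hpef, hple⟩ := exists_potential w ((k : ℝ) ^ n) (by positivity)
    (fun i j => conc2 i j) hw0 hperm
  refine ⟨p, hp0, ?_, ?_⟩
  · intro i j
    have h5 := hpef i j
    simp only [hw] at h5
    linarith
  · calc ∑ i, p i ≤ ∑ _i : Fin n, (n : ℝ) * (k : ℝ) ^ n :=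
          Finset.sum_le_sum fun i _ => hple i
      _ = (n : ℝ) * ((n : ℝ) * (k : ℝ) ^ n) := by
          rw [Finset.sum_const, Finset.card_univ, Fintype.card_fin, nsmul_eq_mul]
      _ = (n : ℝ) ^ 2 * (k : ℝ) ^ n := by ring
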